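/- Let Ψ₀ be a unit spinor with ω·Ψ₀ = −7Ψ₀. Then ω acts as the identity on the 7-dimensional space {X·Ψ₀ : X ∈ R^7}, i.e. ω·(X·Ψ₀) = X·Ψ₀ for all X ∈ R^7. -/

import Mathlib

/-- The negative definite quadratic form on ℝ⁷ (convention eᵢ·eᵢ = −1). -/
noncomputable def Q : QuadraticForm ℝ (Fin 7 → ℝ) :=
  QuadraticMap.weightedSumSquares ℝ (fun _ : Fin 7 => (-1 : ℝ))

/-- The Clifford generators e₁,…,e₇ (0-indexed: `e i` is e_{i+1}). -/
noncomputable def e (i : Fin 7) : CliffordAlgebra Q := CliffordAlgebra.ι Q (Pi.single i 1)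

/-- ω = e₁₂₃ − e₁₄₅ − e₁₆₇ − e₂₄₆ + e₂₅₇ − e₃₄₇ − e₃₅₆ as a Clifford algebra element. -/
noncomputable def ω : CliffordAlgebra Q :=
  e 0 * e 1 * e 2 - e 0 * e 3 * e 4 - e 0 * e 5 * e 6 - e 1 * e 3 * e 5
    + e 1 * e 4 * e 6 - e 2 * e 3 * e 6 - e 2 * e 4 * e 5

/-- The characteristic torsion element T = 2ω − 8e₁₂₃. -/
noncomputable def T : CliffordAlgebra Q := (2 : ℝ) • ω - (8 : ℝ) • (e 0 * e 1 * e 2)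

lemma esq (i : Fin 7) : e i * e i = -1 := by
  rw [e, CliffordAlgebra.ι_sq_scalar]
  simp [Q, QuadraticMap.weightedSumSquares_apply, Pi.single_apply]
  show algebraMap ℝ (CliffordAlgebra Q) (-1) = -1
  rw [map_neg, map_one]

lemma polar_single {i j : Fin 7} (h : i ≠ j) :
    QuadraticMap.polar Q (Pi.single i 1) (Pi.single j 1) = 0 := by
  rw [QuadraticMap.polar]
  simp only [Q, QuadraticMap.weightedSumSquares_apply, ← Finset.sum_sub_distrib]
  apply Finset.sum_eq_zero
  intro k _
  have h1 : (Pi.single i 1 : Fin 7 → ℝ) k * (Pi.single j 1 : Fin 7 → ℝ) k = 0 := by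
    simp only [Pi.single_apply]
    rcases eq_or_ne k i with rfl | hk
    · simp [h]
    · simp [hk]
  simp only [Pi.add_apply, smul_eq_mul]
  nlinarith [h1]

lemma eswap {i j : Fin 7} (h : i ≠ j) : e i * e j = -(e j * e i) := by
  have h2 := CliffordAlgebra.ι_mul_ι_add_swap (Q := Q) (Pi.single i 1) (Pi.single j 1)
  rw [polar_single h, map_zero] at h2
  rw [e, e]
  linear_combination (norm := noncomm_ring) h2

lemma mul_swap (i j : Fin 7) (h : j < i) : e i * e j = -(e j * e i) :=
  eswap (ne_of_gt h)

lemma mul_swapL (i j : Fin 7) (h : j < i) (x : CliffordAlgebra Q) :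
    e i * (e j * x) = -(e j * (e i * x)) := by
  rw [← mul_assoc, eswap (ne_of_gt h), neg_mul, mul_assoc]

lemma mul_sq (i : Fin 7) : e i * e i = -1 := esq i

lemma mul_sqL (i : Fin 7) (x : CliffordAlgebra Q) : e i * (e i * x) = -x := by
  rw [← mul_assoc, esq]; simp

noncomputable def t1 : CliffordAlgebra Q := e 0 * e 1 * e 2
noncomputable def t2 : CliffordAlgebra Q := -(e 0 * e 3 * e 4)
noncomputable def t3 : CliffordAlgebra Q := -(e 0 * e 5 * e 6)
noncomputable def t4 : CliffordAlgebra Q := -(e 1 * e 3 * e 5)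
noncomputable def t5 : CliffordAlgebra Q := e 1 * e 4 * e 6
noncomputable def t6 : CliffordAlgebra Q := -(e 2 * e 3 * e 6)
noncomputable def t7 : CliffordAlgebra Q := -(e 2 * e 4 * e 5)

lemma omega_eq : ω = t1 + (t2 + (t3 + (t4 + (t5 + (t6 + t7))))) := by
  unfold ω t1 t2 t3 t4 t5 t6 t7; abel

lemma sq1 : t1 * t1 = 1 := by
  simp (config := { decide := true }) [t1, mul_assoc, mul_swap, mul_swapL, mul_sq, mul_sqL]

lemma sq2 : t2 * t2 = 1 := by
  simp (config := { decide := true }) [t2, mul_assoc, mul_swap, mul_swapL, mul_sq, mul_sqL]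

lemma sq3 : t3 * t3 = 1 := by
  simp (config := { decide := true }) [t3, mul_assoc, mul_swap, mul_swapL, mul_sq, mul_sqL]

lemma sq4 : t4 * t4 = 1 := by
  simp (config := { decide := true }) [t4, mul_assoc, mul_swap, mul_swapL, mul_sq, mul_sqL]

lemma sq5 : t5 * t5 = 1 := by
  simp (config := { decide := true }) [t5, mul_assoc, mul_swap, mul_swapL, mul_sq, mul_sqL]

lemma sq6 : t6 * t6 = 1 := by
  simp (config := { decide := true }) [t6, mul_assoc, mul_swap, mul_swapL, mul_sq, mul_sqL]

lemma sq7 : t7 * t7 = 1 := by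
  simp (config := { decide := true }) [t7, mul_assoc, mul_swap, mul_swapL, mul_sq, mul_sqL]

lemma c12 : Commute t1 t2 := by
  show t1 * t2 = t2 * t1
  simp (config := { decide := true }) [t1, t2, mul_assoc, mul_swap, mul_swapL, mul_sq, mul_sqL]

lemma c13 : Commute t1 t3 := by
  show t1 * t3 = t3 * t1
  simp (config := { decide := true }) [t1, t3, mul_assoc, mul_swap, mul_swapL, mul_sq, mul_sqL]

lemma c14 : Commute t1 t4 := by
  show t1 * t4 = t4 * t1
  simp (config := { decide := true }) [t1, t4, mul_assoc, mul_swap, mul_swapL, mul_sq, mul_sqL]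

lemma c15 : Commute t1 t5 := by
  show t1 * t5 = t5 * t1
  simp (config := { decide := true }) [t1, t5, mul_assoc, mul_swap, mul_swapL, mul_sq, mul_sqL]

lemma c16 : Commute t1 t6 := by
  show t1 * t6 = t6 * t1
  simp (config := { decide := true }) [t1, t6, mul_assoc, mul_swap, mul_swapL, mul_sq, mul_sqL]

lemma c17 : Commute t1 t7 := by
  show t1 * t7 = t7 * t1
  simp (config := { decide := true }) [t1, t7, mul_assoc, mul_swap, mul_swapL, mul_sq, mul_sqL]

lemma c23 : Commute t2 t3 := by
  show t2 * t3 = t3 * t2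
  simp (config := { decide := true }) [t2, t3, mul_assoc, mul_swap, mul_swapL, mul_sq, mul_sqL]

lemma c24 : Commute t2 t4 := by
  show t2 * t4 = t4 * t2
  simp (config := { decide := true }) [t2, t4, mul_assoc, mul_swap, mul_swapL, mul_sq, mul_sqL]

lemma c25 : Commute t2 t5 := by
  show t2 * t5 = t5 * t2
  simp (config := { decide := true }) [t2, t5, mul_assoc, mul_swap, mul_swapL, mul_sq, mul_sqL]

lemma c26 : Commute t2 t6 := by
  show t2 * t6 = t6 * t2
  simp (config := { decide := true }) [t2, t6, mul_assoc, mul_swap, mul_swapL, mul_sq, mul_sqL]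

lemma c27 : Commute t2 t7 := by
  show t2 * t7 = t7 * t2
  simp (config := { decide := true }) [t2, t7, mul_assoc, mul_swap, mul_swapL, mul_sq, mul_sqL]

lemma c34 : Commute t3 t4 := by
  show t3 * t4 = t4 * t3
  simp (config := { decide := true }) [t3, t4, mul_assoc, mul_swap, mul_swapL, mul_sq, mul_sqL]

lemma c35 : Commute t3 t5 := by
  show t3 * t5 = t5 * t3
  simp (config := { decide := true }) [t3, t5, mul_assoc, mul_swap, mul_swapL, mul_sq, mul_sqL]

lemma c36 : Commute t3 t6 := by
  show t3 * t6 = t6 * t3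
  simp (config := { decide := true }) [t3, t6, mul_assoc, mul_swap, mul_swapL, mul_sq, mul_sqL]

lemma c37 : Commute t3 t7 := by
  show t3 * t7 = t7 * t3
  simp (config := { decide := true }) [t3, t7, mul_assoc, mul_swap, mul_swapL, mul_sq, mul_sqL]

lemma c45 : Commute t4 t5 := by
  show t4 * t5 = t5 * t4
  simp (config := { decide := true }) [t4, t5, mul_assoc, mul_swap, mul_swapL, mul_sq, mul_sqL]

lemma c46 : Commute t4 t6 := by
  show t4 * t6 = t6 * t4
  simp (config := { decide := true }) [t4, t6, mul_assoc, mul_swap, mul_swapL, mul_sq, mul_sqL]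

lemma c47 : Commute t4 t7 := by
  show t4 * t7 = t7 * t4
  simp (config := { decide := true }) [t4, t7, mul_assoc, mul_swap, mul_swapL, mul_sq, mul_sqL]

lemma c56 : Commute t5 t6 := by
  show t5 * t6 = t6 * t5
  simp (config := { decide := true }) [t5, t6, mul_assoc, mul_swap, mul_swapL, mul_sq, mul_sqL]

lemma c57 : Commute t5 t7 := by
  show t5 * t7 = t7 * t5
  simp (config := { decide := true }) [t5, t7, mul_assoc, mul_swap, mul_swapL, mul_sq, mul_sqL]

lemma c67 : Commute t6 t7 := by
  show t6 * t7 = t7 * t6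
  simp (config := { decide := true }) [t6, t7, mul_assoc, mul_swap, mul_swapL, mul_sq, mul_sqL]

lemma wmul0 : ω * e 0 = e 0 * (t1 + t2 + t3 - t4 - t5 - t6 - t7) := by
  unfold ω t1 t2 t3 t4 t5 t6 t7
  simp (config := { decide := true }) [mul_assoc, mul_add, add_mul, mul_sub, sub_mul, mul_neg,
    neg_mul, mul_swap, mul_swapL, mul_sq, mul_sqL]
  abel

lemma wmul1 : ω * e 1 = e 1 * (t1 + t4 + t5 - t2 - t3 - t6 - t7) := by
  unfold ω t1 t2 t3 t4 t5 t6 t7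
  simp (config := { decide := true }) [mul_assoc, mul_add, add_mul, mul_sub, sub_mul, mul_neg,
    neg_mul, mul_swap, mul_swapL, mul_sq, mul_sqL]
  abel

lemma wmul2 : ω * e 2 = e 2 * (t1 + t6 + t7 - t2 - t3 - t4 - t5) := by
  unfold ω t1 t2 t3 t4 t5 t6 t7
  simp (config := { decide := true }) [mul_assoc, mul_add, add_mul, mul_sub, sub_mul, mul_neg,
    neg_mul, mul_swap, mul_swapL, mul_sq, mul_sqL]
  abel

lemma wmul3 : ω * e 3 = e 3 * (t2 + t4 + t6 - t1 - t3 - t5 - t7) := by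
  unfold ω t1 t2 t3 t4 t5 t6 t7
  simp (config := { decide := true }) [mul_assoc, mul_add, add_mul, mul_sub, sub_mul, mul_neg,
    neg_mul, mul_swap, mul_swapL, mul_sq, mul_sqL]
  abel

lemma wmul4 : ω * e 4 = e 4 * (t2 + t5 + t7 - t1 - t3 - t4 - t6) := by
  unfold ω t1 t2 t3 t4 t5 t6 t7
  simp (config := { decide := true }) [mul_assoc, mul_add, add_mul, mul_sub, sub_mul, mul_neg,
    neg_mul, mul_swap, mul_swapL, mul_sq, mul_sqL]
  abel

lemma wmul5 : ω * e 5 = e 5 * (t3 + t4 + t7 - t1 - t2 - t5 - t6) := by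
  unfold ω t1 t2 t3 t4 t5 t6 t7
  simp (config := { decide := true }) [mul_assoc, mul_add, add_mul, mul_sub, sub_mul, mul_neg,
    neg_mul, mul_swap, mul_swapL, mul_sq, mul_sqL]
  abel

lemma wmul6 : ω * e 6 = e 6 * (t3 + t5 + t6 - t1 - t2 - t4 - t7) := by
  unfold ω t1 t2 t3 t4 t5 t6 t7
  simp (config := { decide := true }) [mul_assoc, mul_add, add_mul, mul_sub, sub_mul, mul_neg,
    neg_mul, mul_swap, mul_swapL, mul_sq, mul_sqL]
  abel


section aux
variable {S : Type} [AddCommGroup S] [Module ℝ S]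
  [Module (CliffordAlgebra Q) S] [IsScalarTower ℝ (CliffordAlgebra Q) S]

lemma rsmul_comm (r : ℝ) (a : CliffordAlgebra Q) (x : S) : a • (r • x) = r • (a • x) := by
  rw [← algebraMap_smul (CliffordAlgebra Q) r x, ← mul_smul, ← Algebra.commutes, mul_smul,
    algebraMap_smul]

lemma sum_invol_eig_zero :
    ∀ (l : List (CliffordAlgebra Q)), (∀ a ∈ l, a * a = 1) → l.Pairwise Commute →
    ∀ (lam : ℝ) (v : S), (l.length : ℝ) < |lam| → l.sum • v = lam • v → v = 0 := by
  intro l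
  induction l with
  | nil =>
    intro _ _ lam v hlen hsum
    simp only [List.sum_nil, List.length_nil, Nat.cast_zero, zero_smul] at hsum hlen
    have hl : lam ≠ 0 := by
      intro h; rw [h] at hlen; simp at hlen
    have := hsum.symm
    rw [smul_eq_zero] at this
    tauto
  | cons a l ih =>
    intro hsq hpair lam v hlen hsum
    have ha : a * a = 1 := hsq a (by simp)
    have hcomm : ∀ b ∈ l, Commute a b := fun b hb => (List.pairwise_cons.mp hpair).1 b hb
    have hC : Commute a l.sum := Commute.list_sum_right a l hcomm
    rw [List.sum_cons, add_smul] at hsum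
    have h1 : l.sum • v = lam • v - a • v := by
      rw [← hsum]; abel
    have h2 : l.sum • (a • v) = lam • (a • v) - v := by
      rw [← mul_smul, ← hC, mul_smul, h1, smul_sub, rsmul_comm, ← mul_smul, ha, one_smul]
    have main : ∀ ε : ℝ, ε * ε = 1 → v + ε • a • v = 0 := by
      intro ε hε
      apply ih (fun b hb => hsq b (List.mem_cons_of_mem _ hb)) (List.pairwise_cons.mp hpair).2
        (lam - ε) (v + ε • a • v) ?_ ?_
      · have habs : |ε| = 1 := by
          rcases mul_self_eq_one_iff.mp hε with h | h <;> rw [h] <;> norm_num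
        have : |lam| - 1 ≤ |lam - ε| := by
          have := abs_sub_abs_le_abs_sub lam ε
          rw [habs] at this; linarith
        rw [List.length_cons] at hlen
        push_cast at hlen
        linarith
      · rw [smul_add, h1, rsmul_comm, h2, smul_sub, smul_smul ε lam, mul_comm ε lam, sub_smul,
          smul_add, smul_add, smul_smul lam ε, smul_smul ε ε, hε, one_smul]
        abel
    have m1 := main 1 (by norm_num)
    have m2 := main (-1) (by norm_num)
    have h2v : (2 : ℝ) • v = 0 := by
      rw [two_smul]
      calc v + v = (v + (1:ℝ) • a • v) + (v + (-1:ℝ) • a • v) := by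
            rw [one_smul, neg_smul, one_smul]; abel
        _ = 0 := by rw [m1, m2, add_zero]
    simpa using h2v

lemma term_eig (Ψ₀ : S) (hΨ : ω • Ψ₀ = (-7 : ℝ) • Ψ₀)
    (t : CliffordAlgebra Q) (l : List (CliffordAlgebra Q))
    (hsum : t + l.sum = ω) (hlen : (l.length : ℝ) < 8)
    (ht : t * t = 1) (hl : ∀ a ∈ l, a * a = 1) (hpair : l.Pairwise Commute)
    (hcl : ∀ a ∈ l, Commute t a) : t • Ψ₀ = -Ψ₀ := by
  have hCω : Commute t ω := by
    rw [← hsum]; exact (Commute.refl t).add_right (Commute.list_sum_right t l hcl)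
  set v := Ψ₀ + t • Ψ₀ with hv
  have htv : t • v = v := by
    rw [hv, smul_add, ← mul_smul, ht, one_smul, add_comm]
  have hωv : ω • v = (-7 : ℝ) • v := by
    rw [hv, smul_add, hΨ, ← mul_smul, ← hCω, mul_smul, hΨ, rsmul_comm, smul_add]
  have hlv : l.sum • v = (-8 : ℝ) • v := by
    have hls : l.sum = ω - t := by rw [← hsum]; abel
    rw [hls, sub_smul, hωv, htv, show ((-8:ℝ)) = (-7) - 1 by norm_num, sub_smul, one_smul]
  have habs : (8 : ℝ) = |(-8 : ℝ)| := by
    rw [abs_of_neg (by norm_num : (-8:ℝ) < 0)]; norm_num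
  have hv0 : v = 0 := sum_invol_eig_zero l hl hpair (-8) v (habs ▸ hlen) hlv
  rw [hv] at hv0
  exact eq_neg_of_add_eq_zero_right hv0

end aux

/-- if Ψ₀ is a unit spinor with ω·Ψ₀ = −7Ψ₀, then ω acts as the
identity on {X·Ψ₀ : X ∈ ℝ⁷}: ω·(X·Ψ₀) = X·Ψ₀ for all X. -/
theorem stmt10 (S : Type) [NormedAddCommGroup S] [InnerProductSpace ℝ S]
    [Module (CliffordAlgebra Q) S] [IsScalarTower ℝ (CliffordAlgebra Q) S]
    (hdim : Module.finrank ℝ S = 8)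
    (Ψ₀ : S) (hunit : ‖Ψ₀‖ = 1) (hΨ : ω • Ψ₀ = (-7 : ℝ) • Ψ₀) :
    ∀ X : Fin 7 → ℝ, ω • (CliffordAlgebra.ι Q X • Ψ₀) = CliffordAlgebra.ι Q X • Ψ₀ := by
  have et1 : t1 • Ψ₀ = -Ψ₀ := by
    refine term_eig Ψ₀ hΨ t1 [t2, t3, t4, t5, t6, t7] ?_ (by norm_num) sq1
      (by intro b hb; simp only [List.mem_cons, List.not_mem_nil, or_false] at hb; rcases hb with rfl|rfl|rfl|rfl|rfl|rfl; exacts [sq2, sq3, sq4, sq5, sq6, sq7])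
      (List.Pairwise.cons (by intro b hb; simp only [List.mem_cons, List.not_mem_nil, or_false] at hb; rcases hb with rfl|rfl|rfl|rfl|rfl; exacts [c23, c24, c25, c26, c27]) (List.Pairwise.cons (by intro b hb; simp only [List.mem_cons, List.not_mem_nil, or_false] at hb; rcases hb with rfl|rfl|rfl|rfl; exacts [c34, c35, c36, c37]) (List.Pairwise.cons (by intro b hb; simp only [List.mem_cons, List.not_mem_nil, or_false] at hb; rcases hb with rfl|rfl|rfl; exacts [c45, c46, c47]) (List.Pairwise.cons (by intro b hb; simp only [List.mem_cons, List.not_mem_nil, or_false] at hb; rcases hb with rfl|rfl; exacts [c56, c57]) (List.Pairwise.cons (by intro b hb; simp only [List.mem_cons, List.not_mem_nil, or_false] at hb; rcases hb with rfl; exacts [c67]) (List.Pairwise.cons (by intro b hb; simp at hb) List.Pairwise.nil))))))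
      (by intro b hb; simp only [List.mem_cons, List.not_mem_nil, or_false] at hb; rcases hb with rfl|rfl|rfl|rfl|rfl|rfl; exacts [c12, c13, c14, c15, c16, c17])
    rw [omega_eq]; simp only [List.sum_cons, List.sum_nil, add_zero]; try abel
  have et2 : t2 • Ψ₀ = -Ψ₀ := by
    refine term_eig Ψ₀ hΨ t2 [t1, t3, t4, t5, t6, t7] ?_ (by norm_num) sq2
      (by intro b hb; simp only [List.mem_cons, List.not_mem_nil, or_false] at hb; rcases hb with rfl|rfl|rfl|rfl|rfl|rfl; exacts [sq1, sq3, sq4, sq5, sq6, sq7])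
      (List.Pairwise.cons (by intro b hb; simp only [List.mem_cons, List.not_mem_nil, or_false] at hb; rcases hb with rfl|rfl|rfl|rfl|rfl; exacts [c13, c14, c15, c16, c17]) (List.Pairwise.cons (by intro b hb; simp only [List.mem_cons, List.not_mem_nil, or_false] at hb; rcases hb with rfl|rfl|rfl|rfl; exacts [c34, c35, c36, c37]) (List.Pairwise.cons (by intro b hb; simp only [List.mem_cons, List.not_mem_nil, or_false] at hb; rcases hb with rfl|rfl|rfl; exacts [c45, c46, c47]) (List.Pairwise.cons (by intro b hb; simp only [List.mem_cons, List.not_mem_nil, or_false] at hb; rcases hb with rfl|rfl; exacts [c56, c57]) (List.Pairwise.cons (by intro b hb; simp only [List.mem_cons, List.not_mem_nil, or_false] at hb; rcases hb with rfl; exacts [c67]) (List.Pairwise.cons (by intro b hb; simp at hb) List.Pairwise.nil))))))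
      (by intro b hb; simp only [List.mem_cons, List.not_mem_nil, or_false] at hb; rcases hb with rfl|rfl|rfl|rfl|rfl|rfl; exacts [c12.symm, c23, c24, c25, c26, c27])
    rw [omega_eq]; simp only [List.sum_cons, List.sum_nil, add_zero]; try abel
  have et3 : t3 • Ψ₀ = -Ψ₀ := by
    refine term_eig Ψ₀ hΨ t3 [t1, t2, t4, t5, t6, t7] ?_ (by norm_num) sq3
      (by intro b hb; simp only [List.mem_cons, List.not_mem_nil, or_false] at hb; rcases hb with rfl|rfl|rfl|rfl|rfl|rfl; exacts [sq1, sq2, sq4, sq5, sq6, sq7])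
      (List.Pairwise.cons (by intro b hb; simp only [List.mem_cons, List.not_mem_nil, or_false] at hb; rcases hb with rfl|rfl|rfl|rfl|rfl; exacts [c12, c14, c15, c16, c17]) (List.Pairwise.cons (by intro b hb; simp only [List.mem_cons, List.not_mem_nil, or_false] at hb; rcases hb with rfl|rfl|rfl|rfl; exacts [c24, c25, c26, c27]) (List.Pairwise.cons (by intro b hb; simp only [List.mem_cons, List.not_mem_nil, or_false] at hb; rcases hb with rfl|rfl|rfl; exacts [c45, c46, c47]) (List.Pairwise.cons (by intro b hb; simp only [List.mem_cons, List.not_mem_nil, or_false] at hb; rcases hb with rfl|rfl; exacts [c56, c57]) (List.Pairwise.cons (by intro b hb; simp only [List.mem_cons, List.not_mem_nil, or_false] at hb; rcases hb with rfl; exacts [c67]) (List.Pairwise.cons (by intro b hb; simp at hb) List.Pairwise.nil))))))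
      (by intro b hb; simp only [List.mem_cons, List.not_mem_nil, or_false] at hb; rcases hb with rfl|rfl|rfl|rfl|rfl|rfl; exacts [c13.symm, c23.symm, c34, c35, c36, c37])
    rw [omega_eq]; simp only [List.sum_cons, List.sum_nil, add_zero]; try abel
  have et4 : t4 • Ψ₀ = -Ψ₀ := by
    refine term_eig Ψ₀ hΨ t4 [t1, t2, t3, t5, t6, t7] ?_ (by norm_num) sq4
      (by intro b hb; simp only [List.mem_cons, List.not_mem_nil, or_false] at hb; rcases hb with rfl|rfl|rfl|rfl|rfl|rfl; exacts [sq1, sq2, sq3, sq5, sq6, sq7])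
      (List.Pairwise.cons (by intro b hb; simp only [List.mem_cons, List.not_mem_nil, or_false] at hb; rcases hb with rfl|rfl|rfl|rfl|rfl; exacts [c12, c13, c15, c16, c17]) (List.Pairwise.cons (by intro b hb; simp only [List.mem_cons, List.not_mem_nil, or_false] at hb; rcases hb with rfl|rfl|rfl|rfl; exacts [c23, c25, c26, c27]) (List.Pairwise.cons (by intro b hb; simp only [List.mem_cons, List.not_mem_nil, or_false] at hb; rcases hb with rfl|rfl|rfl; exacts [c35, c36, c37]) (List.Pairwise.cons (by intro b hb; simp only [List.mem_cons, List.not_mem_nil, or_false] at hb; rcases hb with rfl|rfl; exacts [c56, c57]) (List.Pairwise.cons (by intro b hb; simp only [List.mem_cons, List.not_mem_nil, or_false] at hb; rcases hb with rfl; exacts [c67]) (List.Pairwise.cons (by intro b hb; simp at hb) List.Pairwise.nil))))))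
      (by intro b hb; simp only [List.mem_cons, List.not_mem_nil, or_false] at hb; rcases hb with rfl|rfl|rfl|rfl|rfl|rfl; exacts [c14.symm, c24.symm, c34.symm, c45, c46, c47])
    rw [omega_eq]; simp only [List.sum_cons, List.sum_nil, add_zero]; try abel
  have et5 : t5 • Ψ₀ = -Ψ₀ := by
    refine term_eig Ψ₀ hΨ t5 [t1, t2, t3, t4, t6, t7] ?_ (by norm_num) sq5
      (by intro b hb; simp only [List.mem_cons, List.not_mem_nil, or_false] at hb; rcases hb with rfl|rfl|rfl|rfl|rfl|rfl; exacts [sq1, sq2, sq3, sq4, sq6, sq7])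
      (List.Pairwise.cons (by intro b hb; simp only [List.mem_cons, List.not_mem_nil, or_false] at hb; rcases hb with rfl|rfl|rfl|rfl|rfl; exacts [c12, c13, c14, c16, c17]) (List.Pairwise.cons (by intro b hb; simp only [List.mem_cons, List.not_mem_nil, or_false] at hb; rcases hb with rfl|rfl|rfl|rfl; exacts [c23, c24, c26, c27]) (List.Pairwise.cons (by intro b hb; simp only [List.mem_cons, List.not_mem_nil, or_false] at hb; rcases hb with rfl|rfl|rfl; exacts [c34, c36, c37]) (List.Pairwise.cons (by intro b hb; simp only [List.mem_cons, List.not_mem_nil, or_false] at hb; rcases hb with rfl|rfl; exacts [c46, c47]) (List.Pairwise.cons (by intro b hb; simp only [List.mem_cons, List.not_mem_nil, or_false] at hb; rcases hb with rfl; exacts [c67]) (List.Pairwise.cons (by intro b hb; simp at hb) List.Pairwise.nil))))))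
      (by intro b hb; simp only [List.mem_cons, List.not_mem_nil, or_false] at hb; rcases hb with rfl|rfl|rfl|rfl|rfl|rfl; exacts [c15.symm, c25.symm, c35.symm, c45.symm, c56, c57])
    rw [omega_eq]; simp only [List.sum_cons, List.sum_nil, add_zero]; try abel
  have et6 : t6 • Ψ₀ = -Ψ₀ := by
    refine term_eig Ψ₀ hΨ t6 [t1, t2, t3, t4, t5, t7] ?_ (by norm_num) sq6
      (by intro b hb; simp only [List.mem_cons, List.not_mem_nil, or_false] at hb; rcases hb with rfl|rfl|rfl|rfl|rfl|rfl; exacts [sq1, sq2, sq3, sq4, sq5, sq7])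
      (List.Pairwise.cons (by intro b hb; simp only [List.mem_cons, List.not_mem_nil, or_false] at hb; rcases hb with rfl|rfl|rfl|rfl|rfl; exacts [c12, c13, c14, c15, c17]) (List.Pairwise.cons (by intro b hb; simp only [List.mem_cons, List.not_mem_nil, or_false] at hb; rcases hb with rfl|rfl|rfl|rfl; exacts [c23, c24, c25, c27]) (List.Pairwise.cons (by intro b hb; simp only [List.mem_cons, List.not_mem_nil, or_false] at hb; rcases hb with rfl|rfl|rfl; exacts [c34, c35, c37]) (List.Pairwise.cons (by intro b hb; simp only [List.mem_cons, List.not_mem_nil, or_false] at hb; rcases hb with rfl|rfl; exacts [c45, c47]) (List.Pairwise.cons (by intro b hb; simp only [List.mem_cons, List.not_mem_nil, or_false] at hb; rcases hb with rfl; exacts [c57]) (List.Pairwise.cons (by intro b hb; simp at hb) List.Pairwise.nil))))))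
      (by intro b hb; simp only [List.mem_cons, List.not_mem_nil, or_false] at hb; rcases hb with rfl|rfl|rfl|rfl|rfl|rfl; exacts [c16.symm, c26.symm, c36.symm, c46.symm, c56.symm, c67])
    rw [omega_eq]; simp only [List.sum_cons, List.sum_nil, add_zero]; try abel
  have et7 : t7 • Ψ₀ = -Ψ₀ := by
    refine term_eig Ψ₀ hΨ t7 [t1, t2, t3, t4, t5, t6] ?_ (by norm_num) sq7
      (by intro b hb; simp only [List.mem_cons, List.not_mem_nil, or_false] at hb; rcases hb with rfl|rfl|rfl|rfl|rfl|rfl; exacts [sq1, sq2, sq3, sq4, sq5, sq6])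
      (List.Pairwise.cons (by intro b hb; simp only [List.mem_cons, List.not_mem_nil, or_false] at hb; rcases hb with rfl|rfl|rfl|rfl|rfl; exacts [c12, c13, c14, c15, c16]) (List.Pairwise.cons (by intro b hb; simp only [List.mem_cons, List.not_mem_nil, or_false] at hb; rcases hb with rfl|rfl|rfl|rfl; exacts [c23, c24, c25, c26]) (List.Pairwise.cons (by intro b hb; simp only [List.mem_cons, List.not_mem_nil, or_false] at hb; rcases hb with rfl|rfl|rfl; exacts [c34, c35, c36]) (List.Pairwise.cons (by intro b hb; simp only [List.mem_cons, List.not_mem_nil, or_false] at hb; rcases hb with rfl|rfl; exacts [c45, c46]) (List.Pairwise.cons (by intro b hb; simp only [List.mem_cons, List.not_mem_nil, or_false] at hb; rcases hb with rfl; exacts [c56]) (List.Pairwise.cons (by intro b hb; simp at hb) List.Pairwise.nil))))))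
      (by intro b hb; simp only [List.mem_cons, List.not_mem_nil, or_false] at hb; rcases hb with rfl|rfl|rfl|rfl|rfl|rfl; exacts [c17.symm, c27.symm, c37.symm, c47.symm, c57.symm, c67.symm])
    rw [omega_eq]; simp only [List.sum_cons, List.sum_nil, add_zero]; try abel
  have key : ∀ i : Fin 7, ω • (e i • Ψ₀) = e i • Ψ₀ := by
    intro i
    fin_cases i
    · show ω • (e 0 • Ψ₀) = e 0 • Ψ₀
      rw [← mul_smul, wmul0, mul_smul]
      congr 1
      simp only [add_smul, sub_smul, et1, et2, et3, et4, et5, et6, et7]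
      abel
    · show ω • (e 1 • Ψ₀) = e 1 • Ψ₀
      rw [← mul_smul, wmul1, mul_smul]
      congr 1
      simp only [add_smul, sub_smul, et1, et2, et3, et4, et5, et6, et7]
      abel
    · show ω • (e 2 • Ψ₀) = e 2 • Ψ₀
      rw [← mul_smul, wmul2, mul_smul]
      congr 1
      simp only [add_smul, sub_smul, et1, et2, et3, et4, et5, et6, et7]
      abel
    · show ω • (e 3 • Ψ₀) = e 3 • Ψ₀
      rw [← mul_smul, wmul3, mul_smul]
      congr 1
      simp only [add_smul, sub_smul, et1, et2, et3, et4, et5, et6, et7]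
      abel
    · show ω • (e 4 • Ψ₀) = e 4 • Ψ₀
      rw [← mul_smul, wmul4, mul_smul]
      congr 1
      simp only [add_smul, sub_smul, et1, et2, et3, et4, et5, et6, et7]
      abel
    · show ω • (e 5 • Ψ₀) = e 5 • Ψ₀
      rw [← mul_smul, wmul5, mul_smul]
      congr 1
      simp only [add_smul, sub_smul, et1, et2, et3, et4, et5, et6, et7]
      abel
    · show ω • (e 6 • Ψ₀) = e 6 • Ψ₀
      rw [← mul_smul, wmul6, mul_smul]
      congr 1
      simp only [add_smul, sub_smul, et1, et2, et3, et4, et5, et6, et7]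
      abel
  intro X
  have hXd : X = ∑ i : Fin 7, X i • (Pi.single i 1 : Fin 7 → ℝ) := by
    ext j
    simp [Finset.sum_apply, Pi.single_apply]
  have hXe : CliffordAlgebra.ι Q X = ∑ i : Fin 7, X i • e i := by
    conv_lhs => rw [hXd]
    simp [e, map_sum]
  rw [hXe, Finset.sum_smul, Finset.smul_sum]
  refine Finset.sum_congr rfl ?_
  intro i _
  rw [smul_assoc, rsmul_comm, key i]
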